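/- Let p be a prime number and R a commutative ring. Let I be the ideal of 𝕎 R generated by the set {p} ∪ range(verschiebung), i.e. I = p·𝕎(R) + V(𝕎(R)) as an ideal. Then: (1) I equals the kernel of the composite ring homomorphism 𝕎 R → R → R/pR, where the first map is the 0-th ghost component w₀ (x ↦ x.coeff 0) and the second is the quotient map; (2) I² = p·I, i.e. I·I equals the product of the principal ideal (p) of 𝕎 R with I. -/

import Mathlib

open WittVector

lemma aux_mem_range_V {p : ℕ} [Fact p.Prime] {R : Type*} [CommRing R]
    (z : WittVector p R) (h : z.coeff 0 = 0) :
    z ∈ Set.range (WittVector.verschiebung : WittVector p R → WittVector p R) := by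
  refine ⟨WittVector.mk p (fun n => z.coeff (n + 1)), ?_⟩
  ext ⟨_ | n⟩
  · simpa using h.symm
  · simp [WittVector.verschiebung_coeff_succ, WittVector.coeff_mk]

lemma aux_VV {p : ℕ} [Fact p.Prime] {R : Type*} [CommRing R] (a b : WittVector p R) :
    WittVector.verschiebung a * WittVector.verschiebung b
      = (p : WittVector p R) * WittVector.verschiebung (a * b) := by
  have h1 := WittVector.verschiebung_mul_frobenius a (WittVector.verschiebung b)
  rw [WittVector.frobenius_verschiebung] at h1
  rw [← h1]
  have h2 : a * (b * (p : WittVector p R)) = (p : ℕ) • (a * b) := by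
    rw [nsmul_eq_mul]; ring
  rw [h2, map_nsmul, nsmul_eq_mul]

lemma aux_gen_mem_ker {p : ℕ} [Fact p.Prime] {R : Type*} [CommRing R] :
    Ideal.span ({(p : WittVector p R)} ∪
      Set.range (WittVector.verschiebung : WittVector p R → WittVector p R)) ≤
    RingHom.ker ((Ideal.Quotient.mk (Ideal.span {(p : R)})).comp
        (WittVector.constantCoeff : WittVector p R →+* R)) := by
  rw [Ideal.span_le]
  rintro y hy
  rw [Set.mem_union, Set.mem_singleton_iff, Set.mem_range] at hy
  rw [SetLike.mem_coe, RingHom.mem_ker, RingHom.comp_apply, Ideal.Quotient.eq_zero_iff_mem]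
  obtain rfl | ⟨a, rfl⟩ := hy
  · rw [map_natCast]
    exact Ideal.mem_span_singleton_self _
  · have : WittVector.constantCoeff (WittVector.verschiebung a) = 0 :=
      WittVector.verschiebung_coeff_zero a
    rw [this]
    exact Ideal.zero_mem _

/-- Let `I = p·𝕎(R) + V(𝕎(R))` be the ideal of the ring of `p`-typical Witt vectors
generated by `p` and the image of Verschiebung. Then `I` is the kernel of the composite
`𝕎 R → R → R/pR` of the 0-th ghost component with the quotient map, and `I² = p·I`. -/
theorem stmt12 (p : ℕ) [Fact p.Prime] (R : Type*) [CommRing R]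
    (I : Ideal (WittVector p R))
    (hI : I = Ideal.span ({(p : WittVector p R)} ∪
      Set.range (WittVector.verschiebung : WittVector p R → WittVector p R))) :
    I = RingHom.ker ((Ideal.Quotient.mk (Ideal.span {(p : R)})).comp
        (WittVector.constantCoeff : WittVector p R →+* R)) ∧
    I * I = Ideal.span {(p : WittVector p R)} * I := by
  have hsub : ({(p : WittVector p R)} ∪
      Set.range (WittVector.verschiebung : WittVector p R → WittVector p R)) ⊆ I := by
    rw [hI]; exact Ideal.subset_span
  constructor
  · apply le_antisymm
    · rw [hI]; exact aux_gen_mem_ker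
    · intro x hx
      rw [RingHom.mem_ker, RingHom.comp_apply, Ideal.Quotient.eq_zero_iff_mem,
        Ideal.mem_span_singleton'] at hx
      obtain ⟨r, hr⟩ := hx
      have h1 : (p : WittVector p R) * WittVector.teichmuller p r ∈ I :=
        Ideal.mul_mem_right _ _ (hsub (Or.inl rfl))
      have h2 : x - (p : WittVector p R) * WittVector.teichmuller p r ∈ I := by
        apply hsub
        right
        apply aux_mem_range_V
        show WittVector.constantCoeff
          (x - (p : WittVector p R) * WittVector.teichmuller p r) = 0
        rw [map_sub, map_mul, map_natCast]
        have ht : WittVector.constantCoeff (WittVector.teichmuller p r) = r :=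
          WittVector.teichmuller_coeff_zero p r
        rw [ht, ← hr]
        ring
      simpa using Ideal.add_mem _ h2 h1
  · apply le_antisymm
    · have e : I * I = Ideal.span ({(p : WittVector p R)} ∪
        Set.range (WittVector.verschiebung : WittVector p R → WittVector p R)) *
          Ideal.span ({(p : WittVector p R)} ∪
        Set.range (WittVector.verschiebung : WittVector p R → WittVector p R)) := by
        rw [← hI]
      rw [e, Ideal.span_mul_span, Ideal.span_le]
      rintro z hz
      simp only [Set.mem_mul, Set.mem_iUnion, Set.mem_singleton_iff, exists_prop] at hz
      obtain ⟨s, hs, t, ht, rfl⟩ := hz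
      rw [Set.mem_union, Set.mem_singleton_iff, Set.mem_range] at hs ht
      have hsI : s ∈ I := hsub (by simpa [Set.mem_union, Set.mem_singleton_iff] using hs)
      have htI : t ∈ I := hsub (by simpa [Set.mem_union, Set.mem_singleton_iff] using ht)
      obtain rfl | ⟨a, rfl⟩ := hs
      · exact Ideal.mul_mem_mul (Ideal.mem_span_singleton_self _) htI
      obtain rfl | ⟨b, rfl⟩ := ht
      · rw [mul_comm (WittVector.verschiebung a) ((p : ℕ) : WittVector p R)]
        exact Ideal.mul_mem_mul (Ideal.mem_span_singleton_self _) hsI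
      · rw [aux_VV]
        exact Ideal.mul_mem_mul (Ideal.mem_span_singleton_self _)
          (hsub (Or.inr ⟨a * b, rfl⟩))
    · exact Ideal.mul_mono (by rw [hI]; exact Ideal.span_mono Set.subset_union_left) le_rfl
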